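/- If M is an indecomposable finite dimensional representation of a quiver Q and B is any basis of M (a union of bases of the vector spaces at each vertex), then the coefficient quiver Γ(M,B) is connected. -/

import Mathlib

/-- A quiver: vertices, arrows, source and target maps. -/
structure QuiverData where
  Q0 : Type
  Q1 : Type
  src : Q1 → Q0
  tgt : Q1 → Q0

/-- A `k`-linear representation of the quiver `Q`. -/
structure RepOf (k : Type) [Field k] (Q : QuiverData) where
  V : Q.Q0 → Type
  [acg : ∀ q, AddCommGroup (V q)]
  [mod : ∀ q, Module k (V q)]
  f : ∀ a : Q.Q1, V (Q.src a) →ₗ[k] V (Q.tgt a)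

attribute [instance] RepOf.acg RepOf.mod

/-- A subrepresentation: a family of subspaces invariant under all arrow maps. -/
structure SubRep {k : Type} [Field k] {Q : QuiverData} (M : RepOf k Q) where
  U : ∀ q, Submodule k (M.V q)
  inv : ∀ a : Q.Q1, (U (Q.src a)).map (M.f a) ≤ U (Q.tgt a)

/-- A representation is indecomposable if it is nonzero and admits no decomposition into
two componentwise complementary nonzero subrepresentations. -/
def IsIndec {k : Type} [Field k] {Q : QuiverData} (M : RepOf k Q) : Prop :=
  (∃ q, ∃ x : M.V q, x ≠ 0) ∧
  ∀ U W : SubRep M, (∀ q, IsCompl (U.U q) (W.U q)) →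
    (∀ q, U.U q = ⊥) ∨ (∀ q, W.U q = ⊥)

/-- There is an arrow `a` whose matrix entry at `(x, y)` with respect to the basis `B`
is nonzero (an arrow `x → y` in the coefficient quiver). -/
def coeffRelA {k : Type} [Field k] {Q : QuiverData} (M : RepOf k Q) {ι : Q.Q0 → Type}
    (B : ∀ q, Module.Basis (ι q) k (M.V q)) (a : Q.Q1) (x y : Σ q, ι q) : Prop :=
  ∃ (hx : x.1 = Q.src a) (hy : y.1 = Q.tgt a),
    ((B (Q.tgt a)).repr ((M.f a) ((B (Q.src a)) (hx ▸ x.2)))) (hy ▸ y.2) ≠ 0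

/-- There is an arrow `x → y` in the coefficient quiver `Γ(M, B)`. -/
def coeffRel {k : Type} [Field k] {Q : QuiverData} (M : RepOf k Q) {ι : Q.Q0 → Type}
    (B : ∀ q, Module.Basis (ι q) k (M.V q)) (x y : Σ q, ι q) : Prop :=
  ∃ a : Q.Q1, coeffRelA M B a x y

/-- The underlying (simple) graph of the coefficient quiver `Γ(M, B)`. -/
def coeffGraph {k : Type} [Field k] {Q : QuiverData} (M : RepOf k Q) {ι : Q.Q0 → Type}
    (B : ∀ q, Module.Basis (ι q) k (M.V q)) : SimpleGraph (Σ q, ι q) where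
  Adj x y := x ≠ y ∧ (coeffRel M B x y ∨ coeffRel M B y x)
  symm := ⟨by rintro x y ⟨h1, h2⟩; exact ⟨h1.symm, h2.symm⟩⟩
  loopless := ⟨fun x h => h.1 rfl⟩


lemma basis_span_isCompl {k V ι : Type} [Field k] [AddCommGroup V] [Module k V]
    (b : Module.Basis ι k V) (s : Set ι) :
    IsCompl (Submodule.span k (b '' s)) (Submodule.span k (b '' sᶜ)) := by
  constructor
  · rw [Submodule.disjoint_def]
    intro x hx hx'
    rw [Module.Basis.mem_span_image] at hx hx'
    have h0 : (b.repr x).support = ∅ := by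
      ext i; simp only [Finset.notMem_empty, iff_false]
      intro hi
      exact hx' hi (hx hi)
    exact (b.repr.map_eq_zero_iff).mp (Finsupp.support_eq_empty.mp h0)
  · rw [codisjoint_iff, ← Submodule.span_union, ← Set.image_union,
      Set.union_compl_self, Set.image_univ, b.span_eq]

/-- If `M` is an indecomposable finite dimensional representation of a
quiver `Q` and `B` is any basis of `M` (one basis of the vector space at each vertex),
then the coefficient quiver `Γ(M, B)` is connected. -/
theorem stmt2 {k : Type} [Field k] {Q : QuiverData} (M : RepOf k Q)
    [∀ q, FiniteDimensional k (M.V q)] (hM : IsIndec M)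
    {ι : Q.Q0 → Type} (B : ∀ q, Module.Basis (ι q) k (M.V q)) :
    (coeffGraph M B).Connected := by
  
  classical
  obtain ⟨⟨q0, x0, hx0⟩, hind⟩ := hM
  set G := coeffGraph M B with hG
  have hne : Nonempty (Σ q, ι q) := by
    have h : (B q0).repr x0 ≠ 0 := fun h => hx0 ((B q0).repr.map_eq_zero_iff.mp h)
    obtain ⟨i, -⟩ := Finsupp.ne_iff.mp h
    exact ⟨⟨q0, i⟩⟩
  rw [SimpleGraph.connected_iff]
  refine ⟨?_, hne⟩
  intro x y
  by_contra hxy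
  set S : ∀ q, Set (ι q) := fun q => {i | G.Reachable x ⟨q, i⟩} with hS
  -- the two subrepresentations
  have key : ∀ (a : Q.Q1) (i : ι (Q.src a)) (j : ι (Q.tgt a)),
      ((B (Q.tgt a)).repr ((M.f a) ((B (Q.src a)) i))) j ≠ 0 →
      (G.Reachable x ⟨Q.src a, i⟩ ↔ G.Reachable x ⟨Q.tgt a, j⟩) := by
    intro a i j hc
    by_cases heq : (⟨Q.src a, i⟩ : Σ q, ι q) = ⟨Q.tgt a, j⟩
    · rw [heq]
    · have hadj : G.Adj ⟨Q.src a, i⟩ ⟨Q.tgt a, j⟩ :=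
        ⟨heq, Or.inl ⟨a, rfl, rfl, hc⟩⟩
      exact ⟨fun h => h.trans hadj.reachable, fun h => h.trans hadj.symm.reachable⟩
  set U : SubRep M :=
    { U := fun q => Submodule.span k ((B q) '' S q)
      inv := by
        intro a
        rw [Submodule.map_span_le]
        rintro m ⟨i, hi, rfl⟩
        rw [Module.Basis.mem_span_image]
        intro j hj
        exact (key a i j (Finsupp.mem_support_iff.mp hj)).mp hi } with hU
  set W : SubRep M :=
    { U := fun q => Submodule.span k ((B q) '' (S q)ᶜ)
      inv := by
        intro a
        rw [Submodule.map_span_le]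
        rintro m ⟨i, hi, rfl⟩
        rw [Module.Basis.mem_span_image]
        intro j hj
        exact fun hr => hi ((key a i j (Finsupp.mem_support_iff.mp hj)).mpr hr) } with hW
  have hcompl : ∀ q, IsCompl (U.U q) (W.U q) := fun q => basis_span_isCompl (B q) (S q)
  rcases hind U W hcompl with h | h
  · have hx : (B x.1) x.2 ∈ U.U x.1 :=
      Submodule.subset_span (Set.mem_image_of_mem _ (by
        show G.Reachable x ⟨x.1, x.2⟩
        exact SimpleGraph.Reachable.refl x))
    rw [h x.1, Submodule.mem_bot] at hx
    exact (B x.1).ne_zero x.2 hx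
  · have hy : (B y.1) y.2 ∈ W.U y.1 :=
      Submodule.subset_span (Set.mem_image_of_mem _ (by
        show ¬ G.Reachable x ⟨y.1, y.2⟩
        exact hxy))
    rw [h y.1, Submodule.mem_bot] at hy
    exact (B y.1).ne_zero y.2 hy
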